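/- Validity of the shares produced in the (n,n) POB scheme: let W be a bit string of length m with even Hamming weight 2s, and let r be an integer with s ≤ r and r − s ≤ m − 2s. Suppose A₁ is a bit string of length m such that (i) at each position i where W has a 1, A₁ has a 1 exactly when the number of 1s of W at positions ≤ i is odd (i.e., A₁ alternates 1,0,1,0,… along the 1-positions of W), and (ii) A₁ has exactly r − s ones at positions where W has a 0. Then both A₁ and W ⊕ A₁ have Hamming weight exactly r. -/

import Mathlib

open Finset

lemma fin_filter_card (n : ℕ) (q : ℕ → Prop) [DecidablePred q] :
    ((Finset.univ : Finset (Fin n)).filter (fun k => q k.val)).card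
      = ((Finset.range n).filter q).card := by
  rw [← Nat.Iio_eq_range, ← Fin.map_valEmbedding_univ, Finset.filter_map, Finset.card_map]
  rfl

lemma range_parity_card (s : ℕ) :
    ((Finset.range (2*s)).filter (fun k => Even k)).card = s ∧
    ((Finset.range (2*s)).filter (fun k => ¬ Even k)).card = s := by
  induction s with
  | zero => simp
  | succ n ih =>
    have h2 : 2 * (n+1) = (2*n + 1) + 1 := by ring
    have h1 : ¬ Even (2*n+1) := by simp [Nat.even_add_one]
    have h0 : Even (2*n) := even_two_mul n
    rw [h2, Finset.range_add_one, Finset.range_add_one]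
    rw [Finset.filter_insert, Finset.filter_insert, Finset.filter_insert, Finset.filter_insert]
    rw [if_neg h1, if_pos h1, if_pos h0, if_neg (by simp [h0])]
    constructor
    · rw [Finset.card_insert_of_notMem (by simp)]
      rw [ih.1]
    · rw [Finset.card_insert_of_notMem (by simp)]
      rw [ih.2]

lemma cum_count (m n : ℕ) (T : Finset (Fin m)) (hT : T.card = n)
    (p : ℕ → Prop) [DecidablePred p] :
    (T.filter (fun i => p ((Finset.Iic i).filter (· ∈ T)).card)).card
      = ((Finset.range n).filter (fun k => p (k+1))).card := by
  set e := T.orderIsoOfFin hT with he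
  have key : ∀ k : Fin n, ((Finset.Iic (e k : Fin m)).filter (· ∈ T)).card = k + 1 := by
    intro k
    have himg : (Finset.Iic (e k : Fin m)).filter (· ∈ T)
        = (Finset.Iic k).image (fun j => (e j : Fin m)) := by
      ext i
      simp only [Finset.mem_filter, Finset.mem_Iic, Finset.mem_image]
      constructor
      · rintro ⟨hle, hi⟩
        refine ⟨e.symm ⟨i, hi⟩, ?_, by simp⟩
        have : e (e.symm ⟨i, hi⟩) ≤ e k := by rw [OrderIso.apply_symm_apply]; exact hle
        exact e.le_iff_le.mp this
      · rintro ⟨j, hj, rfl⟩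
        exact ⟨by exact_mod_cast (e.le_iff_le.mpr hj : e j ≤ e k), (e j).2⟩
    rw [himg, Finset.card_image_of_injective _ (fun a b hab => e.injective (Subtype.ext hab)),
      Fin.card_Iic]
  have himg2 : T.filter (fun i => p ((Finset.Iic i).filter (· ∈ T)).card)
      = ((Finset.univ : Finset (Fin n)).filter (fun k => p (k.val+1))).image
          (fun k => (e k : Fin m)) := by
    ext i
    simp only [Finset.mem_filter, Finset.mem_image, Finset.mem_univ, true_and]
    constructor
    · rintro ⟨hi, hp⟩
      refine ⟨e.symm ⟨i, hi⟩, ?_, by simp⟩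
      have := key (e.symm ⟨i, hi⟩)
      simp only [OrderIso.apply_symm_apply] at this
      rwa [this] at hp
    · rintro ⟨k, hk, rfl⟩
      exact ⟨(e k).2, by rwa [key k]⟩
  rw [himg2, Finset.card_image_of_injective _ (fun a b hab => e.injective (Subtype.ext hab))]
  exact fin_filter_card n (fun x => p (x+1))

theorem pob_shares_valid (m s r : ℕ) (hsr : s ≤ r) (hrs : r - s ≤ m - 2 * s)
    (W A₁ : Fin m → Bool)
    (hW : (Finset.univ.filter (fun i => W i = true)).card = 2 * s)
    (hAlt : ∀ i : Fin m, W i = true →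
      (A₁ i = true ↔ Odd ((Finset.Iic i).filter (fun j => W j = true)).card))
    (hFill : (Finset.univ.filter (fun i => W i = false ∧ A₁ i = true)).card = r - s) :
    (Finset.univ.filter (fun i => A₁ i = true)).card = r ∧
    (Finset.univ.filter (fun i => xor (W i) (A₁ i) = true)).card = r := by
  set T : Finset (Fin m) := Finset.univ.filter (fun i => W i = true) with hT
  have hmemT : ∀ i, i ∈ T ↔ W i = true := by intro i; simp [hT]
  have hcount : ∀ i, ((Finset.Iic i).filter (· ∈ T)).card
      = ((Finset.Iic i).filter (fun j => W j = true)).card := by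
    intro i; congr 1; apply Finset.filter_congr; intro j _; simp [hmemT]
  have hS1 : (Finset.univ.filter (fun i => W i = true ∧ A₁ i = true)).card = s := by
    have h1 : Finset.univ.filter (fun i => W i = true ∧ A₁ i = true)
        = T.filter (fun i => Odd ((Finset.Iic i).filter (· ∈ T)).card) := by
      ext i
      simp only [Finset.mem_filter, Finset.mem_univ, true_and, hmemT, hcount]
      exact ⟨fun ⟨hw, ha⟩ => ⟨hw, (hAlt i hw).mp ha⟩, fun ⟨hw, ho⟩ => ⟨hw, (hAlt i hw).mpr ho⟩⟩
    rw [h1, cum_count m (2*s) T hW]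
    have h2 : ((Finset.range (2*s)).filter (fun k => Odd (k+1))).card
        = ((Finset.range (2*s)).filter (fun k => Even k)).card := by
      congr 1; apply Finset.filter_congr; intro k _
      simp [Nat.odd_add_one, Nat.not_odd_iff_even]
    rw [h2, (range_parity_card s).1]
  have hS2 : (Finset.univ.filter (fun i => W i = true ∧ A₁ i = false)).card = s := by
    have h1 : Finset.univ.filter (fun i => W i = true ∧ A₁ i = false)
        = T.filter (fun i => Even ((Finset.Iic i).filter (· ∈ T)).card) := by
      ext i
      simp only [Finset.mem_filter, Finset.mem_univ, true_and, hmemT, hcount]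
      constructor
      · rintro ⟨hw, ha⟩
        refine ⟨hw, ?_⟩
        have hna : ¬ (A₁ i = true) := by simp [ha]
        rw [hAlt i hw] at hna
        exact Nat.not_odd_iff_even.mp hna
      · rintro ⟨hw, hev⟩
        refine ⟨hw, ?_⟩
        have : ¬ (A₁ i = true) := fun h =>
          Nat.not_odd_iff_even.mpr hev ((hAlt i hw).mp h)
        simpa using this
    rw [h1, cum_count m (2*s) T hW]
    have h2 : ((Finset.range (2*s)).filter (fun k => Even (k+1))).card
        = ((Finset.range (2*s)).filter (fun k => ¬ Even k)).card := by
      congr 1; apply Finset.filter_congr; intro k _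
      simp [Nat.even_add_one]
    rw [h2, (range_parity_card s).2]
  constructor
  · have hsplit := Finset.card_filter_add_card_filter_not
      (s := Finset.univ.filter (fun i => A₁ i = true)) (p := fun i => W i = true)
    have e1 : (Finset.univ.filter (fun i => A₁ i = true)).filter (fun i => W i = true)
        = Finset.univ.filter (fun i => W i = true ∧ A₁ i = true) := by
      ext i; simp [and_comm]
    have e2 : (Finset.univ.filter (fun i => A₁ i = true)).filter (fun i => ¬ (W i = true))
        = Finset.univ.filter (fun i => W i = false ∧ A₁ i = true) := by
      ext i; cases hWi : W i <;> simp [hWi]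
    rw [e1, e2, hS1, hFill] at hsplit
    omega
  · have hsplit := Finset.card_filter_add_card_filter_not
      (s := Finset.univ.filter (fun i => xor (W i) (A₁ i) = true)) (p := fun i => W i = true)
    have e1 : (Finset.univ.filter (fun i => xor (W i) (A₁ i) = true)).filter (fun i => W i = true)
        = Finset.univ.filter (fun i => W i = true ∧ A₁ i = false) := by
      ext i; cases hWi : W i <;> cases hAi : A₁ i <;> simp [hWi, hAi]
    have e2 : (Finset.univ.filter (fun i => xor (W i) (A₁ i) = true)).filter (fun i => ¬ (W i = true))
        = Finset.univ.filter (fun i => W i = false ∧ A₁ i = true) := by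
      ext i; cases hWi : W i <;> cases hAi : A₁ i <;> simp [hWi, hAi]
    rw [e1, e2, hS2, hFill] at hsplit
    omega
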